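/- Let F, G ∈ ℂ[x,y,z] be homogeneous polynomials of degree 2 and let a, b ∈ ℂ ∖ {0}. Let M be the 3×2 matrix with rows (∂F/∂x, ∂G/∂x), (∂F/∂y, ∂G/∂y), (a·F, b·G). Assume that the set of points of ℙ²(ℂ) at which M has rank at most 1 (i.e. the common projective zeros of the three 2×2 minors of M) is finite. Then every triple (A, B, C) of homogeneous polynomials in ℂ[x,y,z] of degrees 3, 3, 2 respectively satisfying A·∂F/∂x + B·∂F/∂y + C·a·F = 0 and A·∂G/∂x + B·∂G/∂y + C·b·G = 0 is a scalar multiple of the syzygy s = ( (∂F/∂y)·bG − (∂G/∂y)·aF , −((∂F/∂x)·bG − (∂G/∂x)·aF) , (∂F/∂x)(∂G/∂y) − (∂F/∂y)(∂G/∂x) ); that is, there exists c ∈ ℂ with A = c·((∂F/∂y)·bG − (∂G/∂y)·aF), B = −c·((∂F/∂x)·bG − (∂G/∂x)·aF), and C = c·((∂F/∂x)(∂G/∂y) − (∂F/∂y)(∂G/∂x)). -/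

import Mathlib

open MvPolynomial

noncomputable section SyzygyAux

/-! ### Auxiliary: the grading homomorphism `φ(x) ↦ φ(t·x)` -/

/-- The ring hom `φ(x) ↦ φ(t·x)` into polynomials in `t`. -/
private def Psi (R : Type*) [CommRing R] (σ : Type*) :
    MvPolynomial σ R →+* Polynomial (MvPolynomial σ R) :=
  MvPolynomial.eval₂Hom (Polynomial.C.comp MvPolynomial.C)
    (fun i => Polynomial.C (MvPolynomial.X i) * Polynomial.X)

variable {R : Type*} [CommRing R] {σ : Type*}

private lemma Psi_monomial (u : σ →₀ ℕ) (r : R) :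
    Psi R σ (monomial u r) = Polynomial.C (monomial u r) * Polynomial.X ^ u.degree := by
  classical
  have hmon : (monomial u r : MvPolynomial σ R)
      = MvPolynomial.C r * ∏ i ∈ u.support, MvPolynomial.X i ^ u i := by
    rw [monomial_eq]; rfl
  simp only [Psi, coe_eval₂Hom, eval₂_monomial, RingHom.coe_comp, Function.comp_apply]
  rw [Finsupp.prod]
  have hstep : ∀ i ∈ u.support, (Polynomial.C (MvPolynomial.X (R := R) i) * Polynomial.X) ^ u i
      = Polynomial.C (MvPolynomial.X i ^ u i) * Polynomial.X ^ u i := by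
    intro i _; rw [mul_pow, ← Polynomial.C_pow]
  rw [Finset.prod_congr rfl hstep, Finset.prod_mul_distrib, ← map_prod,
    Finset.prod_pow_eq_pow_sum, ← mul_assoc, ← map_mul, ← hmon]
  rfl

private lemma Psi_coeff (φ : MvPolynomial σ R) (m : ℕ) (u : σ →₀ ℕ) :
    MvPolynomial.coeff u ((Psi R σ φ).coeff m)
      = if u.degree = m then MvPolynomial.coeff u φ else 0 := by
  classical
  induction φ using MvPolynomial.induction_on' with
  | monomial v r =>
    rw [Psi_monomial, Polynomial.coeff_C_mul_X_pow,
      apply_ite (MvPolynomial.coeff u), MvPolynomial.coeff_zero]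
    by_cases hvu : v = u
    · subst hvu
      by_cases h : m = v.degree
      · rw [if_pos h, if_pos h.symm]
      · rw [if_neg h, if_neg (fun hc => h hc.symm)]
    · have hz : MvPolynomial.coeff u (monomial v r) = 0 := by
        rw [coeff_monomial, if_neg hvu]
      split_ifs <;> simp [hz]
  | add p q hp hq =>
    simp only [map_add, Polynomial.coeff_add, MvPolynomial.coeff_add, hp, hq]
    split_ifs <;> simp

private lemma Psi_eval_one (φ : MvPolynomial σ R) : Polynomial.eval 1 (Psi R σ φ) = φ := by
  have key := MvPolynomial.eval₂_comp_left (Polynomial.evalRingHom (1 : MvPolynomial σ R))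
    (Polynomial.C.comp MvPolynomial.C)
    (fun i => Polynomial.C (MvPolynomial.X i) * Polynomial.X) φ
  simp only [Psi, coe_eval₂Hom]
  rw [show Polynomial.eval 1 (eval₂ (Polynomial.C.comp MvPolynomial.C)
      (fun i => Polynomial.C (MvPolynomial.X i) * Polynomial.X) φ)
    = (Polynomial.evalRingHom (1 : MvPolynomial σ R)) (eval₂ _ _ φ) from rfl, key]
  have h1 : (Polynomial.evalRingHom (1 : MvPolynomial σ R)).comp
      (Polynomial.C.comp MvPolynomial.C) = MvPolynomial.C := by
    ext r
    simp
  rw [h1]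
  have h2 : ((Polynomial.evalRingHom (1 : MvPolynomial σ R)) ∘
      fun i => Polynomial.C (MvPolynomial.X i) * Polynomial.X) = MvPolynomial.X := by
    funext i; simp
  rw [h2, eval₂_eta]

private lemma Psi_ne_zero {φ : MvPolynomial σ R} (h : φ ≠ 0) : Psi R σ φ ≠ 0 := by
  intro hc; exact h (by rw [← Psi_eval_one (R := R) φ, hc, Polynomial.eval_zero])

private lemma Psi_homog {φ : MvPolynomial σ R} {n : ℕ} (hφ : φ.IsHomogeneous n) :
    Psi R σ φ = Polynomial.C φ * Polynomial.X ^ n := by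
  ext m : 1
  apply MvPolynomial.ext
  intro u
  rw [Psi_coeff, Polynomial.coeff_C_mul_X_pow,
    apply_ite (MvPolynomial.coeff u), MvPolynomial.coeff_zero]
  rcases eq_or_ne (MvPolynomial.coeff u φ) 0 with h0 | h0
  · split_ifs <;> simp [h0]
  · have hd : u.degree = n := by
      have := hφ h0
      rw [Finsupp.degree_eq_weight_one (R := ℕ)]; exact this
    by_cases h : m = n
    · rw [if_pos h, if_pos (by omega)]
    · rw [if_neg h, if_neg (by omega)]

/-- A divisor of a nonzero homogeneous polynomial is homogeneous. -/
private lemma divisor_homog [IsDomain R] (d e : MvPolynomial σ R) (hd : d ≠ 0) (he : e ≠ 0)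
    {n : ℕ} (h : (d * e).IsHomogeneous n) : ∃ m, d.IsHomogeneous m := by
  have hD := Psi_ne_zero (R := R) (σ := σ) hd
  have hE := Psi_ne_zero (R := R) (σ := σ) he
  have hprod : Psi R σ d * Psi R σ e = Polynomial.C (d * e) * Polynomial.X ^ n := by
    rw [← map_mul, Psi_homog h]
  have hde : d * e ≠ 0 := mul_ne_zero hd he
  have hmon : Polynomial.C (d * e) * Polynomial.X ^ n = Polynomial.monomial n (d * e) :=
    Polynomial.C_mul_X_pow_eq_monomial
  have hdeg : (Psi R σ d).natDegree + (Psi R σ e).natDegree = n := by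
    rw [← Polynomial.natDegree_mul hD hE, hprod, hmon, Polynomial.natDegree_monomial_eq _ hde]
  have htdeg : (Psi R σ d).natTrailingDegree + (Psi R σ e).natTrailingDegree = n := by
    rw [← Polynomial.natTrailingDegree_mul hD hE, hprod, hmon,
      Polynomial.natTrailingDegree_monomial hde]
  have hled : (Psi R σ d).natTrailingDegree ≤ (Psi R σ d).natDegree :=
    Polynomial.natTrailingDegree_le_natDegree _
  have hlee : (Psi R σ e).natTrailingDegree ≤ (Psi R σ e).natDegree :=
    Polynomial.natTrailingDegree_le_natDegree _
  refine ⟨(Psi R σ d).natDegree, ?_⟩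
  intro u hu
  rw [show Finsupp.weight (1 : σ → ℕ) = Finsupp.degree from Finsupp.degree_eq_weight_one.symm]
  have hcoeff : (Psi R σ d).coeff u.degree ≠ 0 := by
    intro hc
    have hx := Psi_coeff d u.degree u
    rw [hc, if_pos rfl] at hx
    exact hu (by rw [← hx, MvPolynomial.coeff_zero])
  have h1 := Polynomial.le_natDegree_of_ne_zero hcoeff
  have h2 := Polynomial.natTrailingDegree_le_of_ne_zero hcoeff
  omega

/-! ### Auxiliary: homogeneity lemmas -/

private lemma degree_eq_sum_univ [Fintype σ] (d : σ →₀ ℕ) : d.degree = ∑ i, d i := by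
  rw [Finsupp.degree]
  exact Finset.sum_subset (Finset.subset_univ _)
    (fun i _ hi => Finsupp.notMem_support_iff.mp hi)

private lemma eval_smul_of_homog [Fintype σ] {φ : MvPolynomial σ R} {n : ℕ}
    (hφ : φ.IsHomogeneous n) (c : R) (v : σ → R) :
    eval (c • v) φ = c ^ n * eval v φ := by
  rw [eval_eq', eval_eq', Finset.mul_sum]
  apply Finset.sum_congr rfl
  intro u hu
  have hd : u.degree = n := by
    have := hφ (MvPolynomial.mem_support_iff.mp hu)
    rw [Finsupp.degree_eq_weight_one (R := ℕ)]; exact this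
  have key : ∏ i, (c • v) i ^ u i = c ^ n * ∏ i, v i ^ u i := by
    have hstep : ∀ i ∈ Finset.univ, (c • v) i ^ u i = c ^ u i * v i ^ u i := by
      intro i _; rw [Pi.smul_apply, smul_eq_mul, mul_pow]
    rw [Finset.prod_congr rfl hstep, Finset.prod_mul_distrib,
      Finset.prod_pow_eq_pow_sum, ← degree_eq_sum_univ, hd]
  rw [key]; ring

private lemma eq_C_of_isHomogeneous_zero {φ : MvPolynomial σ R} (h : φ.IsHomogeneous 0) :
    φ = C (coeff 0 φ) := by
  apply MvPolynomial.ext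
  intro u
  rcases eq_or_ne u 0 with rfl | hu
  · simp
  · classical
    rw [coeff_C, if_neg (fun hc => hu hc.symm)]
    exact h.coeff_eq_zero (fun hc => hu ((Finsupp.degree_eq_zero_iff u).mp hc))

private lemma pderiv_homog [Fintype σ] {φ : MvPolynomial σ R} {n : ℕ}
    (hφ : φ.IsHomogeneous n) (i : σ) : (pderiv i φ).IsHomogeneous (n - 1) := by
  classical
  rw [φ.as_sum]
  rw [map_sum]
  apply MvPolynomial.IsHomogeneous.sum
  intro u hu
  rw [pderiv_monomial]
  rcases eq_or_ne (u i) 0 with h0 | h0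
  · rw [h0]; simp only [Nat.cast_zero, mul_zero]
    rw [monomial_zero]
    exact isHomogeneous_zero _ _ _
  · apply isHomogeneous_monomial
    have hd : u.degree = n := by
      have := hφ (MvPolynomial.mem_support_iff.mp hu)
      rw [Finsupp.degree_eq_weight_one (R := ℕ)]; exact this
    have hsub : ∀ j, ((u - Finsupp.single i 1 : σ →₀ ℕ)) j = u j - (Finsupp.single i 1) j :=
      fun j => Finsupp.tsub_apply u (Finsupp.single i 1) j
    have key : (u - Finsupp.single i 1).degree + 1 = u.degree := by
      rw [degree_eq_sum_univ, degree_eq_sum_univ,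
        ← Finset.add_sum_erase _ _ (Finset.mem_univ i),
        ← Finset.add_sum_erase _ u (Finset.mem_univ i)]
      have h1 : ((u - Finsupp.single i 1 : σ →₀ ℕ)) i = u i - 1 := by
        rw [hsub, Finsupp.single_eq_same]
      have h2 : ∀ j ∈ Finset.univ.erase i, ((u - Finsupp.single i 1 : σ →₀ ℕ)) j = u j := by
        intro j hj
        rw [hsub, Finsupp.single_eq_of_ne' (Finset.ne_of_mem_erase hj).symm]
        omega
      rw [Finset.sum_congr rfl h2, h1]
      have hee : ∑ x ∈ Finset.univ.erase i, u x = (Finset.univ.erase i).sum ⇑u := rfl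
      omega
    omega

/-- If `c * φ` and `φ ≠ 0` are homogeneous of the same degree, `c` is a constant. -/
private lemma exists_C_of_mul_homog [IsDomain R] {c φ : MvPolynomial σ R} {n : ℕ}
    (hφ : φ.IsHomogeneous n) (hφ0 : φ ≠ 0) (h : (c * φ).IsHomogeneous n) :
    ∃ γ : R, c = C γ := by
  rcases eq_or_ne c 0 with rfl | hc
  · exact ⟨0, by simp⟩
  obtain ⟨m, hm⟩ := divisor_homog c φ hc hφ0 h
  have hne : c * φ ≠ 0 := mul_ne_zero hc hφ0
  have hmn : m + n = n := (hm.mul hφ).inj_right h hne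
  have hm0 : m = 0 := by omega
  subst hm0
  exact ⟨coeff 0 c, eq_C_of_isHomogeneous_zero hm⟩

/-! ### Auxiliary: the unique factorization argument -/

private lemma syz_prop {S : Type*} [CommRing S] [IsDomain S] [UniqueFactorizationMonoid S]
    {p q r A B Cc : S} (hp : p ≠ 0)
    (h1 : A * q = B * p) (h2 : A * r = Cc * p)
    (prim : ∀ d : S, d ∣ p → d ∣ q → d ∣ r → IsUnit d) :
    ∃ c, A = c * p ∧ B = c * q ∧ Cc = c * r := by
  rcases eq_or_ne A 0 with rfl | hA
  · refine ⟨0, by simp, ?_, ?_⟩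
    · rcases mul_eq_zero.mp (h1.symm.trans (zero_mul q)) with hB | hp'
      · rw [hB, zero_mul]
      · exact absurd hp' hp
    · rcases mul_eq_zero.mp (h2.symm.trans (zero_mul r)) with hC | hp'
      · rw [hC, zero_mul]
      · exact absurd hp' hp
  obtain ⟨A', p', g, hcop, hgA, hgp⟩ :=
    UniqueFactorizationMonoid.exists_reduced_factors A hA p
  have hg : g ≠ 0 := fun h => hA (by rw [← hgA, h, zero_mul])
  have e1 : A' * q = B * p' := by
    apply mul_left_cancel₀ hg
    calc g * (A' * q) = (g * A') * q := by ring
    _ = B * (g * p') := by rw [hgA, hgp]; exact h1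
    _ = g * (B * p') := by ring
  have e2 : A' * r = Cc * p' := by
    apply mul_left_cancel₀ hg
    calc g * (A' * r) = (g * A') * r := by ring
    _ = Cc * (g * p') := by rw [hgA, hgp]; exact h2
    _ = g * (Cc * p') := by ring
  have hq' : p' ∣ q := hcop.symm.dvd_of_dvd_mul_left ⟨B, by linear_combination e1⟩
  have hr' : p' ∣ r := hcop.symm.dvd_of_dvd_mul_left ⟨Cc, by linear_combination e2⟩
  have hpu : IsUnit p' := prim p' ⟨g, by rw [← hgp]; ring⟩ hq' hr'
  obtain ⟨u, hu⟩ := hpu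
  have hAc : A = A' * ↑u⁻¹ * p := by
    rw [← hgA, ← hgp, ← hu]
    calc (g : S) * A' = A' * (↑u⁻¹ * ↑u) * g := by
          rw [Units.inv_mul]; ring
    _ = A' * ↑u⁻¹ * (g * ↑u) := by ring
  refine ⟨A' * ↑u⁻¹, hAc, ?_, ?_⟩
  · apply mul_right_cancel₀ hp
    calc B * p = A * q := h1.symm
    _ = (A' * ↑u⁻¹ * p) * q := by rw [← hAc]
    _ = A' * ↑u⁻¹ * q * p := by ring
  · apply mul_right_cancel₀ hp
    calc Cc * p = A * r := h2.symm
    _ = (A' * ↑u⁻¹ * p) * r := by rw [← hAc]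
    _ = A' * ↑u⁻¹ * r * p := by ring

/-! ### Auxiliary: infinitely many projective zeros -/

/-- Restriction of a multivariate polynomial to a parametrized line. -/
private def lineRestrict (h : MvPolynomial (Fin 3) ℂ) (w u : Fin 3 → ℂ) : Polynomial ℂ :=
  MvPolynomial.eval₂ Polynomial.C
    (fun m => Polynomial.C (w m) + Polynomial.X * Polynomial.C (u m)) h

private lemma lineRestrict_eval (h : MvPolynomial (Fin 3) ℂ) (w u : Fin 3 → ℂ) (s : ℂ) :
    Polynomial.eval s (lineRestrict h w u) = eval (fun m => w m + s * u m) h := by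
  rw [lineRestrict,
    show Polynomial.eval s (eval₂ Polynomial.C
      (fun m => Polynomial.C (w m) + Polynomial.X * Polynomial.C (u m)) h)
      = (Polynomial.evalRingHom s) (eval₂ _ _ h) from rfl,
    MvPolynomial.eval₂_comp_left (Polynomial.evalRingHom s)]
  have h1 : (Polynomial.evalRingHom s).comp Polynomial.C = RingHom.id ℂ := by
    ext r; simp
  have h2 : ((Polynomial.evalRingHom s) ∘
      fun m => Polynomial.C (w m) + Polynomial.X * Polynomial.C (u m))
      = fun m => w m + s * u m := by
    funext m; simp; ring
  rw [h1, h2, eval₂_id]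

/-- A nonzero homogeneous polynomial of positive degree in three variables has a
`ℂ`-parametrized family of pairwise non-proportional nonzero zeros. -/
private lemma exists_family {h : MvPolynomial (Fin 3) ℂ} {n : ℕ} (hn : 0 < n)
    (hh : h.IsHomogeneous n) (h0 : h ≠ 0) :
    ∃ z : ℂ → (Fin 3 → ℂ), (∀ t, z t ≠ 0) ∧ (∀ t, eval (z t) h = 0) ∧
      ∀ t t' : ℂ, (∃ a : ℂ, a • z t' = z t) → t = t' := by
  classical
  have hP0 : ∃ P₀ : Fin 3 → ℂ, eval P₀ h ≠ 0 := by
    by_contra hc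
    push_neg at hc
    exact h0 (MvPolynomial.funext (fun x => by rw [hc x, map_zero]))
  obtain ⟨P₀, hP₀⟩ := hP0
  have hP0ne : P₀ ≠ 0 := by
    rintro rfl
    apply hP₀
    have hterm : ∀ u : Fin 3 →₀ ℕ, u ∈ h.support → coeff u h * ∏ i, (0 : ℂ) ^ u i = 0 := by
      intro u hu
      have hd : u.degree = n := by
        have := hh (MvPolynomial.mem_support_iff.mp hu)
        rw [Finsupp.degree_eq_weight_one (R := ℕ)]; exact this
      have hex : ∃ i, u i ≠ 0 := by
        by_contra hcc
        push_neg at hcc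
        have : u = 0 := Finsupp.ext (fun i => hcc i)
        rw [this] at hd
        simp only [map_zero] at hd
        omega
      obtain ⟨i, hi⟩ := hex
      have : ∏ j, (0 : ℂ) ^ u j = 0 :=
        Finset.prod_eq_zero (Finset.mem_univ i) (zero_pow hi)
      rw [this, mul_zero]
    rw [eval_eq']
    exact Finset.sum_eq_zero hterm
  obtain ⟨i, hi⟩ : ∃ i, P₀ i ≠ 0 := Function.ne_iff.mp hP0ne
  set j : Fin 3 := if i = 0 then 1 else 0 with hj
  set k : Fin 3 := if i = 2 then 1 else 2 with hk
  have hji : j ≠ i := by fin_cases i <;> simp [hj]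
  have hki : k ≠ i := by fin_cases i <;> simp [hk]
  have hjk : j ≠ k := by fin_cases i <;> simp [hj, hk]
  set Q : ℂ → Fin 3 → ℂ :=
    fun t m => (if m = j then 1 else 0) + (if m = k then t else 0) with hQ
  have hQi : ∀ t, Q t i = 0 := by
    intro t; rw [hQ]; simp [Ne.symm hji, Ne.symm hki]
  have hQj : ∀ t, Q t j = 1 := by
    intro t; rw [hQ]; simp [hjk]
  have hQk : ∀ t, Q t k = t := by
    intro t; rw [hQ]; simp [Ne.symm hjk]
  have hdeg : ∀ t : ℂ, 0 < (lineRestrict h (Q t) P₀).degree := by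
    intro t
    by_contra hc
    push_neg at hc
    have hC := Polynomial.eq_C_of_degree_le_zero hc
    set cc := (lineRestrict h (Q t) P₀).coeff 0 with hcc
    have hrev : lineRestrict h P₀ (Q t) = Polynomial.C cc * Polynomial.X ^ n := by
      apply Polynomial.eq_of_infinite_eval_eq
      apply Set.Infinite.mono (s := {x : ℂ | x ≠ 0})
      · intro x hx
        have hx0 : (x : ℂ) ≠ 0 := hx
        have e1 : (fun m => P₀ m + x * Q t m) = x • (fun m => Q t m + x⁻¹ * P₀ m) := by
          funext m
          rw [Pi.smul_apply, smul_eq_mul]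
          field_simp
          ring
        have hstep : Polynomial.eval x (lineRestrict h P₀ (Q t))
            = x ^ n * Polynomial.eval x⁻¹ (lineRestrict h (Q t) P₀) := by
          rw [lineRestrict_eval, lineRestrict_eval, e1, eval_smul_of_homog hh]
        simp only [Set.mem_setOf_eq]
        rw [hstep, hC]
        rw [Polynomial.eval_C, Polynomial.eval_mul, Polynomial.eval_C, Polynomial.eval_pow,
          Polynomial.eval_X]
        ring
      · have : {x : ℂ | x ≠ 0} = {(0 : ℂ)}ᶜ := by
          ext x; simp
        rw [this]
        exact (Set.finite_singleton 0).infinite_compl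
    have h00 : Polynomial.eval 0 (lineRestrict h P₀ (Q t)) = eval P₀ h := by
      rw [lineRestrict_eval]
      have he : (fun m => P₀ m + 0 * Q t m) = P₀ := by funext m; ring
      rw [he]
    rw [hrev] at h00
    simp [zero_pow hn.ne'] at h00
    exact hP₀ h00.symm
  choose s hs using fun t => Complex.exists_root (hdeg t)
  refine ⟨fun t => (fun m => Q t m + s t * P₀ m), ?_, ?_, ?_⟩
  · intro t hzero
    have hzi : Q t i + s t * P₀ i = 0 := congrFun hzero i
    rw [hQi] at hzi
    have hst : s t = 0 := by
      rcases mul_eq_zero.mp (show s t * P₀ i = 0 by linear_combination hzi) with h' | h'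
      · exact h'
      · exact absurd h' hi
    have hzj : Q t j + s t * P₀ j = 0 := congrFun hzero j
    rw [hQj, hst] at hzj
    simp at hzj
  · intro t
    have := hs t
    rw [Polynomial.IsRoot, lineRestrict_eval] at this
    exact this
  · intro t t' ⟨a, ha⟩
    have hai : a * (Q t' i + s t' * P₀ i) = Q t i + s t * P₀ i := congrFun ha i
    have haj : a * (Q t' j + s t' * P₀ j) = Q t j + s t * P₀ j := congrFun ha j
    have hak : a * (Q t' k + s t' * P₀ k) = Q t k + s t * P₀ k := congrFun ha k
    rw [hQi, hQi] at hai
    rw [hQj, hQj] at haj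
    rw [hQk, hQk] at hak
    have h1 : a * s t' = s t := by
      have hz : (a * s t' - s t) * P₀ i = 0 := by linear_combination hai
      rcases mul_eq_zero.mp hz with h' | h'
      · exact sub_eq_zero.mp h'
      · exact absurd h' hi
    have ha1 : a = 1 := by linear_combination haj - P₀ j * h1
    linear_combination (-1 : ℂ) * hak + P₀ k * h1 + t' * ha1

end SyzygyAux

set_option maxHeartbeats 2000000 in
/-- **Syzygy lemma for two conics.** Let `F, G ∈ ℂ[x,y,z]` be homogeneous of degree 2,
`a, b ∈ ℂ ∖ {0}`, and let `M` be the `3 × 2` matrix with rows `(F_x, G_x)`, `(F_y, G_y)`,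
`(aF, bG)`. If the locus in `ℙ²(ℂ)` where `M` has rank at most 1 (the common projective
zeros of the three `2 × 2` minors) is finite, then every syzygy `(A, B, C)` of the columns
of `M`, with `A, B, C` homogeneous of degrees `3, 3, 2`, is a scalar multiple of
`s = (F_y·bG − G_y·aF, −(F_x·bG − G_x·aF), F_x·G_y − F_y·G_x)`. -/
theorem syzygy_of_two_conics
    (F G : MvPolynomial (Fin 3) ℂ)
    (hF : F.IsHomogeneous 2) (hG : G.IsHomogeneous 2)
    (a b : ℂ) (ha : a ≠ 0) (hb : b ≠ 0)
    (hfin : {x : Projectivization ℂ (Fin 3 → ℂ) |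
        eval x.rep (pderiv 0 F * pderiv 1 G - pderiv 1 F * pderiv 0 G) = 0 ∧
        eval x.rep (pderiv 0 F * (C b * G) - pderiv 0 G * (C a * F)) = 0 ∧
        eval x.rep (pderiv 1 F * (C b * G) - pderiv 1 G * (C a * F)) = 0}.Finite) :
    ∀ A B C' : MvPolynomial (Fin 3) ℂ,
      A.IsHomogeneous 3 → B.IsHomogeneous 3 → C'.IsHomogeneous 2 →
      A * pderiv 0 F + B * pderiv 1 F + C' * (C a * F) = 0 →
      A * pderiv 0 G + B * pderiv 1 G + C' * (C b * G) = 0 →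
      ∃ c : ℂ,
        A = C c * (pderiv 1 F * (C b * G) - pderiv 1 G * (C a * F)) ∧
        B = -(C c * (pderiv 0 F * (C b * G) - pderiv 0 G * (C a * F))) ∧
        C' = C c * (pderiv 0 F * pderiv 1 G - pderiv 1 F * pderiv 0 G) := by
  intro A B C' hA hB hC' e₁ e₂
  set Pp := pderiv 1 F * (C b * G) - pderiv 1 G * (C a * F) with hPpdef
  set Qq := pderiv 0 F * (C b * G) - pderiv 0 G * (C a * F) with hQqdef
  set Rr := pderiv 0 F * pderiv 1 G - pderiv 1 F * pderiv 0 G with hRrdef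
  -- homogeneity of the syzygy components
  have hFx : (pderiv 0 F).IsHomogeneous 1 := by
    have := pderiv_homog hF 0; norm_num at this; exact this
  have hFy : (pderiv 1 F).IsHomogeneous 1 := by
    have := pderiv_homog hF 1; norm_num at this; exact this
  have hGx : (pderiv 0 G).IsHomogeneous 1 := by
    have := pderiv_homog hG 0; norm_num at this; exact this
  have hGy : (pderiv 1 G).IsHomogeneous 1 := by
    have := pderiv_homog hG 1; norm_num at this; exact this
  have hPh : Pp.IsHomogeneous 3 := by
    have := (hFy.mul (hG.C_mul b)).sub (hGy.mul (hF.C_mul a))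
    norm_num at this; exact this
  have hQh : Qq.IsHomogeneous 3 := by
    have := (hFx.mul (hG.C_mul b)).sub (hGx.mul (hF.C_mul a))
    norm_num at this; exact this
  have hRh : Rr.IsHomogeneous 2 := by
    have := (hFx.mul hGy).sub (hFy.mul hGx)
    norm_num at this; exact this
  -- the three 2×2 minors of the pair of syzygies vanish (pure algebra)
  have m1 : A * (-Qq) = B * Pp := by
    rw [hPpdef, hQqdef]
    linear_combination (-(C b * G)) * e₁ + (C a * F) * e₂
  have m2 : A * Rr = C' * Pp := by
    rw [hPpdef, hRrdef]
    linear_combination (pderiv 1 G) * e₁ - (pderiv 1 F) * e₂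
  have m3 : B * Rr = C' * (-Qq) := by
    rw [hQqdef, hRrdef]
    linear_combination (pderiv 0 F) * e₂ - (pderiv 0 G) * e₁
  by_cases hall : Pp = 0 ∧ Qq = 0 ∧ Rr = 0
  · -- then the locus is all of ℙ², contradicting finiteness
    exfalso
    have hinf : {x : Projectivization ℂ (Fin 3 → ℂ) |
        eval x.rep Rr = 0 ∧ eval x.rep Qq = 0 ∧ eval x.rep Pp = 0}.Infinite := by
      have hvne : ∀ t : ℂ, (fun m : Fin 3 => if m = 0 then (1 : ℂ) else if m = 1 then t else 0)
          ≠ 0 := by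
        intro t hc
        have := congrFun hc 0
        simp at this
      apply Set.infinite_of_injective_forall_mem
        (f := fun t : ℂ => Projectivization.mk ℂ _ (hvne t))
      · intro t t' hmk
        obtain ⟨α, hα⟩ := (Projectivization.mk_eq_mk_iff' ℂ _ _ (hvne t) (hvne t')).mp hmk
        have h0 := congrFun hα 0
        have h1 := congrFun hα 1
        simp only [Pi.smul_apply, smul_eq_mul] at h0 h1
        norm_num at h0 h1
        rw [h0] at h1
        simpa using h1.symm
      · intro t
        simp only [Set.mem_setOf_eq, hall.1, hall.2.1, hall.2.2, map_zero, and_self]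
    exact hinf hfin
  · have hne : Pp ≠ 0 ∨ Qq ≠ 0 ∨ Rr ≠ 0 := by by_contra hc; push_neg at hc; exact hall hc
    -- primitivity of the syzygy triple
    have prim : ∀ d : MvPolynomial (Fin 3) ℂ, d ∣ Pp → d ∣ Qq → d ∣ Rr → IsUnit d := by
      intro d hdP hdQ hdR
      by_contra hdu
      have hd0 : d ≠ 0 := by
        rintro rfl
        rcases hne with h' | h' | h'
        · exact h' (zero_dvd_iff.mp hdP)
        · exact h' (zero_dvd_iff.mp hdQ)
        · exact h' (zero_dvd_iff.mp hdR)
      obtain ⟨π, hπirr, hπd⟩ := WfDvdMonoid.exists_irreducible_factor hdu hd0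
      have hπP : π ∣ Pp := hπd.trans hdP
      have hπQ : π ∣ Qq := hπd.trans hdQ
      have hπR : π ∣ Rr := hπd.trans hdR
      have hπ0 : π ≠ 0 := hπirr.ne_zero
      have hπhom : ∃ m, π.IsHomogeneous m := by
        rcases hne with h' | h' | h'
        · obtain ⟨w, hw⟩ := hπP
          exact divisor_homog π w hπ0
            (fun hc => h' (by rw [hw, hc, mul_zero])) (hw ▸ hPh)
        · obtain ⟨w, hw⟩ := hπQ
          exact divisor_homog π w hπ0
            (fun hc => h' (by rw [hw, hc, mul_zero])) (hw ▸ hQh)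
        · obtain ⟨w, hw⟩ := hπR
          exact divisor_homog π w hπ0
            (fun hc => h' (by rw [hw, hc, mul_zero])) (hw ▸ hRh)
      obtain ⟨m, hπm⟩ := hπhom
      have hm0 : m ≠ 0 := by
        rintro rfl
        have hCeq := eq_C_of_isHomogeneous_zero hπm
        apply hπirr.not_isUnit
        rw [hCeq]
        have hcne : coeff 0 π ≠ 0 := by
          intro hc; apply hπ0; rw [hCeq, hc, map_zero]
        exact (isUnit_iff_ne_zero.mpr hcne).map MvPolynomial.C
      obtain ⟨z, hz0, hzz, hzinj⟩ := exists_family (Nat.pos_of_ne_zero hm0) hπm hπ0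
      have hinf : {x : Projectivization ℂ (Fin 3 → ℂ) |
          eval x.rep Rr = 0 ∧ eval x.rep Qq = 0 ∧ eval x.rep Pp = 0}.Infinite := by
        apply Set.infinite_of_injective_forall_mem
          (f := fun t : ℂ => Projectivization.mk ℂ (z t) (hz0 t))
        · intro t t' hmk
          exact hzinj t t'
            ((Projectivization.mk_eq_mk_iff' ℂ _ _ (hz0 t) (hz0 t')).mp hmk)
        · intro t
          have key : ∀ (W : MvPolynomial (Fin 3) ℂ) (nW : ℕ), W.IsHomogeneous nW → π ∣ W →
              eval (Projectivization.mk ℂ (z t) (hz0 t)).rep W = 0 := by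
            intro W nW hWh hπW
            obtain ⟨α, hα⟩ := (Projectivization.mk_eq_mk_iff' ℂ _ _
              (Projectivization.rep_nonzero _) (hz0 t)).mp
              (Projectivization.mk_rep _)
            obtain ⟨w, rfl⟩ := hπW
            rw [← hα, eval_smul_of_homog hWh, map_mul, hzz t, zero_mul, mul_zero]
          exact ⟨key Rr 2 hRh hπR, key Qq 3 hQh hπQ, key Pp 3 hPh hπP⟩
      exact hinf hfin
    -- now split on which component of the syzygy is nonzero
    by_cases hPne : Pp ≠ 0
    · obtain ⟨c₀, hcA, hcB, hcC⟩ := syz_prop hPne m1 m2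
        (fun d hp hq hr => prim d hp ((dvd_neg).mp hq) hr)
      obtain ⟨γ, hγ⟩ := exists_C_of_mul_homog hPh hPne (hcA ▸ hA)
      rw [hγ] at hcA hcB hcC
      exact ⟨γ, hcA, by rw [hcB]; ring, hcC⟩
    · push_neg at hPne
      by_cases hQne : Qq ≠ 0
      · have hQne' : -Qq ≠ 0 := neg_ne_zero.mpr hQne
        obtain ⟨c₀, hcB, hcA, hcC⟩ := syz_prop hQne' m1.symm m3
          (fun d hq hp hr => prim d hp ((dvd_neg).mp hq) hr)
        obtain ⟨γ, hγ⟩ := exists_C_of_mul_homog (hQh.neg) hQne' (hcB ▸ hB)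
        rw [hγ] at hcA hcB hcC
        exact ⟨γ, hcA, by rw [hcB]; ring, hcC⟩
      · push_neg at hQne
        have hRne : Rr ≠ 0 := fun h => hall ⟨hPne, hQne, h⟩
        obtain ⟨c₀, hcC, hcA, hcB⟩ := syz_prop hRne m2.symm m3.symm
          (fun d hr hp hq => prim d hp ((dvd_neg).mp hq) hr)
        obtain ⟨γ, hγ⟩ := exists_C_of_mul_homog hRh hRne (hcC ▸ hC')
        rw [hγ] at hcA hcB hcC
        exact ⟨γ, hcA, by rw [hcB]; ring, hcC⟩
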